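/- Let f : C → D be a homeomorphism between cocompact subsets of ℍ = [0,∞) (i.e., ℍ \ C and ℍ \ D are bounded). Then f is eventually monotone: there exists T ≥ 0 such that f is either strictly increasing on C ∩ [T,∞) or strictly decreasing on C ∩ [T,∞); and if lim_{x→∞, x∈C} f(x) = ∞ then f is strictly increasing on some tail of C. -/

import Mathlib

/-- Let `f : C → D` be a homeomorphism between cocompact subsets of `ℍ = [0,∞)`
(complements bounded in `ℍ`).  Then `f` is eventually strictly monotone: on some tail
`C ∩ [T,∞)` it is either strictly increasing or strictly decreasing; and if
`f(x) → ∞` as `x → ∞` in `C`, then `f` is strictly increasing on some tail. -/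
theorem homeo_cocompact_eventually_monotone
    (C D : Set ℝ) (hC0 : C ⊆ Set.Ici 0) (hD0 : D ⊆ Set.Ici 0)
    (hC : Bornology.IsBounded (Set.Ici 0 \ C)) (hD : Bornology.IsBounded (Set.Ici 0 \ D))
    (f : ↥C ≃ₜ ↥D) :
    (∃ T : ℝ, 0 ≤ T ∧
      (StrictMonoOn (fun x : ↥C => (f x : ℝ)) {x : ↥C | T ≤ (x : ℝ)} ∨
       StrictAntiOn (fun x : ↥C => (f x : ℝ)) {x : ↥C | T ≤ (x : ℝ)})) ∧
    (Filter.Tendsto (fun x : ↥C => (f x : ℝ)) Filter.atTop Filter.atTop →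
      ∃ T : ℝ, 0 ≤ T ∧
        StrictMonoOn (fun x : ↥C => (f x : ℝ)) {x : ↥C | T ≤ (x : ℝ)}) := by
  classical
  -- Find `T ≥ 0` with `[T, ∞) ⊆ C`.
  obtain ⟨M, hM⟩ : BddAbove (Set.Ici 0 \ C) :=
    hC.bddAbove
  set T : ℝ := max M 0 + 1 with hT
  have hT0 : (0 : ℝ) ≤ T := by positivity
  have hsub : Set.Ici T ⊆ C := by
    intro t ht
    by_contra htC
    have h1 : t ∈ Set.Ici 0 \ C := ⟨le_trans hT0 ht, htC⟩
    have h2 : t ≤ M := hM h1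
    have : T ≤ t := ht
    have : max M 0 + 1 ≤ M := le_trans this h2
    nlinarith [le_max_left M 0]
  -- The real-valued function `g` agreeing with `f` on `C`.
  set g : ℝ → ℝ := fun t => if h : t ∈ C then (f ⟨t, h⟩ : ℝ) else 0 with hg
  have hgval : ∀ (x : ↥C), g (x : ℝ) = (f x : ℝ) := by
    intro x; simp [hg, x.2]
  -- `g` is continuous on `[T, ∞)`.
  have hgc : ContinuousOn g (Set.Ici T) := by
    rw [continuousOn_iff_continuous_restrict]
    have : Set.restrict (Set.Ici T) g =
        (fun y : ↥D => (y : ℝ)) ∘ f ∘ Set.inclusion hsub := by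
      funext x
      simp only [Set.restrict_apply, Function.comp_apply]
      rw [show Set.inclusion hsub x = ⟨(x : ℝ), hsub x.2⟩ from rfl]
      exact hgval ⟨(x : ℝ), hsub x.2⟩
    change Continuous (Set.restrict (Set.Ici T) g)
    rw [this]
    exact continuous_subtype_val.comp (f.continuous.comp (continuous_inclusion hsub))
  -- `g` is injective on `[T, ∞)`.
  have hgi : Set.InjOn g (Set.Ici T) := by
    intro x hx y hy hxy
    rw [hgval ⟨x, hsub hx⟩, hgval ⟨y, hsub hy⟩] at hxy
    have := f.injective (Subtype.val_injective hxy)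
    exact congrArg Subtype.val this
  -- monotonicity transporter from `g` on `Ici T` to the subtype statement
  have hmem : ∀ {x : ↥C}, x ∈ {x : ↥C | T ≤ (x : ℝ)} → (x : ℝ) ∈ Set.Ici T := fun h => h
  -- Dichotomy on the tail.
  have key : StrictMonoOn g (Set.Ici T) ∨ StrictAntiOn g (Set.Ici T) := by
    have hTT1 : (T : ℝ) < T + 1 := by linarith
    have hne : g T ≠ g (T + 1) := fun h =>
      absurd (hgi (le_refl T) (by simp [le_of_lt hTT1] : T + 1 ∈ Set.Ici T) h) (by linarith)
    rcases lt_or_gt_of_ne hne with hlt | hgt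
    · left
      intro x hx y hy hxy
      set b : ℝ := max y (T + 1) with hb
      have hTb : T ≤ b := le_trans (le_of_lt hTT1) (le_max_right _ _)
      have hxb : x ∈ Set.Icc T b := ⟨hx, le_trans (le_of_lt hxy) (le_max_left _ _)⟩
      have hyb : y ∈ Set.Icc T b := ⟨hy, le_max_left _ _⟩
      have hT1b : T + 1 ∈ Set.Icc T b := ⟨le_of_lt hTT1, le_max_right _ _⟩
      have hTmemb : T ∈ Set.Icc T b := ⟨le_refl _, hTb⟩
      have hIcc : Set.Icc T b ⊆ Set.Ici T := fun z hz => hz.1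
      rcases ContinuousOn.strictMonoOn_of_injOn_Icc' hTb (hgc.mono hIcc) (hgi.mono hIcc)
        with hm | ha
      · exact hm hxb hyb hxy
      · exact absurd (ha hTmemb hT1b hTT1) (not_lt.mpr (le_of_lt hlt))
    · right
      intro x hx y hy hxy
      set b : ℝ := max y (T + 1) with hb
      have hTb : T ≤ b := le_trans (le_of_lt hTT1) (le_max_right _ _)
      have hxb : x ∈ Set.Icc T b := ⟨hx, le_trans (le_of_lt hxy) (le_max_left _ _)⟩
      have hyb : y ∈ Set.Icc T b := ⟨hy, le_max_left _ _⟩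
      have hT1b : T + 1 ∈ Set.Icc T b := ⟨le_of_lt hTT1, le_max_right _ _⟩
      have hTmemb : T ∈ Set.Icc T b := ⟨le_refl _, hTb⟩
      have hIcc : Set.Icc T b ⊆ Set.Ici T := fun z hz => hz.1
      rcases ContinuousOn.strictMonoOn_of_injOn_Icc' hTb (hgc.mono hIcc) (hgi.mono hIcc)
        with hm | ha
      · exact absurd (hm hTmemb hT1b hTT1) (not_lt.mpr (le_of_lt hgt))
      · exact ha hxb hyb hxy
  have keysub : StrictMonoOn (fun x : ↥C => (f x : ℝ)) {x : ↥C | T ≤ (x : ℝ)} ∨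
      StrictAntiOn (fun x : ↥C => (f x : ℝ)) {x : ↥C | T ≤ (x : ℝ)} := by
    rcases key with hm | ha
    · left
      intro x hx y hy hxy
      have := hm (hmem hx) (hmem hy) (Subtype.coe_lt_coe.mpr hxy)
      rwa [hgval x, hgval y] at this
    · right
      intro x hx y hy hxy
      have := ha (hmem hx) (hmem hy) (Subtype.coe_lt_coe.mpr hxy)
      rwa [hgval x, hgval y] at this
  refine ⟨⟨T, hT0, keysub⟩, fun htend => ⟨T, hT0, ?_⟩⟩
  rcases keysub with hm | ha
  · exact hm
  -- rule out the decreasing case using `f → ∞`.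
  exfalso
  have hTC : T ∈ C := hsub (le_refl T)
  have hT1C : T + 1 ∈ C := hsub (by simp)
  haveI : Nonempty ↥C := ⟨⟨T, hTC⟩⟩
  set xT : ↥C := ⟨T, hTC⟩
  have hev1 : ∀ᶠ x : ↥C in Filter.atTop, (f xT : ℝ) < (f x : ℝ) :=
    htend.eventually (Filter.eventually_gt_atTop _)
  have hev2 : ∀ᶠ x : ↥C in Filter.atTop, (⟨T + 1, hT1C⟩ : ↥C) ≤ x :=
    Filter.eventually_ge_atTop _
  obtain ⟨x, hx1, hx2⟩ := (hev1.and hev2).exists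
  have hxset : x ∈ {x : ↥C | T ≤ (x : ℝ)} := by
    have : T + 1 ≤ (x : ℝ) := hx2
    simp only [Set.mem_setOf_eq]; linarith
  have hTset : xT ∈ {x : ↥C | T ≤ (x : ℝ)} := le_refl T
  have hTx : xT < x := by
    rw [← Subtype.coe_lt_coe]
    have : T + 1 ≤ (x : ℝ) := hx2
    show T < (x : ℝ); linarith
  exact absurd (ha hTset hxset hTx) (not_lt.mpr (le_of_lt hx1))
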